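/- Let c and c' be matchings in a graph G with r vertices, and let w_j ≥ w'_j ≥ 0 be weights on edges. For any integer κ ≥ 1, there exists a multiset OPT of augmentations T with respect to c such that: (i) each T ∈ OPT satisfies T ⊆ c' and |T| ≤ κ, (ii) |OPT| ≤ κr, and (iii) Σ_{T∈OPT} gain(T) ≥ κ·W' - (κ+1)·W, where gain(T) = Σ_{j∈T} w'_j - Σ_{j∈M(T)} w_j, W = Σ_{j∈c} w_j, W' = Σ_{j∈c'} w'_j, and M(T) is the set of edges of c sharing a vertex with some edge of T. -/

import Mathlib

open scoped Classical

/-- A matching: a finite set of non-loop edges, pairwise sharing no vertex. -/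
def IsMatchingSym2 {V : Type*} (c : Finset (Sym2 V)) : Prop :=
  (∀ j ∈ c, ¬ j.IsDiag) ∧
  ∀ j ∈ c, ∀ j' ∈ c, j ≠ j' → ∀ v : V, v ∈ j → v ∉ j'

/-- `M(T)`: the edges of `c` sharing a vertex with some edge of `T`. -/
noncomputable def touchedEdges {V : Type*} (c T : Finset (Sym2 V)) : Finset (Sym2 V) :=
  c.filter (fun j => ∃ e ∈ T, ∃ v : V, v ∈ j ∧ v ∈ e)


namespace MADaux
variable {α : Type*} [DecidableEq α]
set_option linter.unusedSectionVars false
set_option maxHeartbeats 1000000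

lemma extend_chain {Adj : α → α → Prop} {L : List α} (h0 : 0 < L.length)
    (hnd : L.Nodup) (hch : L.Chain' Adj) {y : α} (hy : y ∉ L) (hadj : Adj y L[0]) :
    (y :: L).Nodup ∧ (y :: L).Chain' Adj := by
  refine ⟨by simp [hnd, hy], ?_⟩
  show List.IsChain Adj (y :: L)
  rw [List.isChain_cons]
  refine ⟨?_, hch⟩
  intro b hb
  rw [List.head?_eq_getElem?, List.getElem?_eq_getElem h0, Option.mem_some_iff] at hb
  subst hb
  exact hadj

variable {α : Type*} [DecidableEq α]

set_option linter.unusedSectionVars false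

lemma window_mem {l : List α} (hnd : l.Nodup) {e : ℕ} (he : e < l.length) (i k : ℕ) :
    l[e] ∈ (l.drop i).take k ↔ i ≤ e ∧ e < i + k := by
  constructor
  · intro h
    rw [List.mem_iff_getElem] at h
    obtain ⟨p, hp, hpe⟩ := h
    simp [List.getElem_take, List.getElem_drop] at hpe
    have hlen : p < k ∧ i + p < l.length := by
      simp [List.length_take, List.length_drop] at hp; omega
    have := (List.Nodup.getElem_inj_iff hnd).mp hpe
    omega
  · rintro ⟨h1, h2⟩
    rw [List.mem_iff_getElem]
    refine ⟨e - i, ?_, ?_⟩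
    · simp [List.length_take, List.length_drop]; omega
    · simp [List.getElem_take, List.getElem_drop]
      congr 1; omega

lemma window2_mem {l : List α} (hnd : l.Nodup) {e : ℕ} (he : e < l.length) (i k : ℕ)
    (hik : i + k ≤ 2 * l.length) :
    l[e] ∈ ((l ++ l).drop i).take k ↔ (i ≤ e ∧ e < i + k) ∨ (i ≤ e + l.length ∧ e + l.length < i + k) := by
  have hm : (l ++ l).length = 2 * l.length := by simp; omega
  constructor
  · intro h
    rw [List.mem_iff_getElem] at h
    obtain ⟨p, hp, hpe⟩ := h
    have hlen : p < k ∧ i + p < 2 * l.length := by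
      simp [List.length_take, List.length_drop, hm] at hp ⊢; omega
    rw [List.getElem_take, List.getElem_drop] at hpe
    by_cases hcase : i + p < l.length
    · rw [List.getElem_append_left hcase] at hpe
      have := (List.Nodup.getElem_inj_iff hnd).mp hpe
      omega
    · rw [List.getElem_append_right (by omega)] at hpe
      have := (List.Nodup.getElem_inj_iff hnd).mp hpe
      omega
  · intro h
    rw [List.mem_iff_getElem]
    rcases h with ⟨h1, h2⟩ | ⟨h1, h2⟩
    · refine ⟨e - i, ?_, ?_⟩
      · simp [List.length_take, List.length_drop, hm]; omega
      · rw [List.getElem_take, List.getElem_drop, List.getElem_append_left (by omega)]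
        congr 1; omega
    · refine ⟨e + l.length - i, ?_, ?_⟩
      · simp [List.length_take, List.length_drop, hm]; omega
      · rw [List.getElem_take, List.getElem_drop, List.getElem_append_right (by omega)]
        congr 1; omega

lemma countP_replicate {β : Type*} {p : β → Prop} [DecidablePred p] (n : ℕ) {a : β}
    (ha : p a) : (Multiset.replicate n a).countP p = n := by
  induction n with
  | zero => simp
  | succ n ih => rw [Multiset.replicate_succ, Multiset.countP_cons_of_pos _ ha, ih]

lemma countP_range_map {β : Type*} (n : ℕ) (f : ℕ → β) (p : β → Prop) [DecidablePred p] :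
    ((Multiset.range n).map f).countP p = ((Finset.range n).filter (fun i => p (f i))).card := by
  rw [Multiset.countP_map]; rfl

lemma card_filter_interval (n a b : ℕ) :
    ((Finset.range n).filter (fun i => a ≤ i ∧ i < b)).card = min b n - min a (min b n) := by
  have : (Finset.range n).filter (fun i => a ≤ i ∧ i < b) = Finset.Ico (min a (min b n)) (min b n) := by
    ext i; simp [Finset.mem_Ico]; omega
  rw [this, Nat.card_Ico]

lemma count_pred_range {n a b : ℕ} {p : ℕ → Prop} [DecidablePred p] (hp : ∀ i < n, p i ↔ (a ≤ i ∧ i < b)) :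
    ((Finset.range n).filter p).card = min b n - min a (min b n) := by
  rw [show (Finset.range n).filter p = (Finset.range n).filter (fun i => a ≤ i ∧ i < b) by
    ext i; simp only [Finset.mem_filter, Finset.mem_range]
    exact and_congr_right (fun hi => hp i hi), card_filter_interval]

lemma count_pred_range2 {n a b a' b' : ℕ} (hd : b ≤ a') {p : ℕ → Prop} [DecidablePred p]
    (hp : ∀ i < n, p i ↔ ((a ≤ i ∧ i < b) ∨ (a' ≤ i ∧ i < b'))) :
    ((Finset.range n).filter p).card
      = (min b n - min a (min b n)) + (min b' n - min a' (min b' n)) := by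
  rw [show (Finset.range n).filter p
      = ((Finset.range n).filter (fun i => a ≤ i ∧ i < b))
        ∪ ((Finset.range n).filter (fun i => a' ≤ i ∧ i < b')) by
    ext i
    simp only [Finset.mem_union, Finset.mem_filter, Finset.mem_range]
    constructor
    · rintro ⟨hi, h⟩; rcases (hp i hi).mp h with h | h
      · exact Or.inl ⟨hi, h⟩
      · exact Or.inr ⟨hi, h⟩
    · rintro (⟨hi, h⟩ | ⟨hi, h⟩) <;> exact ⟨hi, (hp i hi).mpr (by tauto)⟩]
  rw [Finset.card_union_of_disjoint (by
    rw [Finset.disjoint_left]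
    intro i hi hi'
    simp only [Finset.mem_filter] at hi hi'
    omega)]
  rw [card_filter_interval, card_filter_interval]

/-- Path construction: sliding windows of length κ plus short prefixes. -/
noncomputable def pathOPT (κ : ℕ) (l : List α) : Multiset (Finset α) :=
  (Multiset.range l.length).map (fun i => ((l.drop i).take κ).toFinset)
  + (Multiset.range (κ - 1)).map (fun d => (l.take (d + 1)).toFinset)

lemma pathOPT_mem {κ : ℕ} (hκ : 1 ≤ κ) {l : List α} (hnd : l.Nodup) (hl : l ≠ []) {S : Finset α}
    (hS : S ∈ pathOPT κ l) : S ⊆ l.toFinset ∧ S.card ≤ κ ∧ S.Nonempty := by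
  have hl0 : 0 < l.length := List.length_pos_iff.mpr hl
  rw [pathOPT, Multiset.mem_add] at hS
  rcases hS with hS | hS <;> rw [Multiset.mem_map] at hS <;>
    obtain ⟨i, hi, rfl⟩ := hS <;> rw [Multiset.mem_range] at hi
  · refine ⟨?_, ?_, ?_⟩
    · intro x hx
      simp only [List.mem_toFinset] at hx ⊢
      exact ((List.take_sublist _ _).trans (List.drop_sublist _ _)).mem hx
    · exact (List.toFinset_card_le _).trans (by simp [List.length_take])
    · refine ⟨l[i], ?_⟩
      simp only [List.mem_toFinset]
      exact (window_mem hnd hi i κ).mpr (by omega)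
  · refine ⟨?_, ?_, ?_⟩
    · intro x hx
      simp only [List.mem_toFinset] at hx ⊢
      exact (List.take_sublist _ _).mem hx
    · exact (List.toFinset_card_le _).trans (by simp [List.length_take]; omega)
    · refine ⟨l[0], ?_⟩
      simp only [List.mem_toFinset]
      have := (window_mem hnd hl0 0 (i + 1)).mpr (by omega)
      simpa using this

lemma mem_take_iff {l : List α} (hnd : l.Nodup) {e : ℕ} (he : e < l.length) (k : ℕ) :
    l[e] ∈ l.take k ↔ e < k := by
  have := window_mem hnd he 0 k
  simp at this
  simpa using this

lemma pathOPT_cov {κ : ℕ} (hκ : 1 ≤ κ) {l : List α} (hnd : l.Nodup) {e : ℕ}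
    (he : e < l.length) :
    (pathOPT κ l).countP (fun S => l[e] ∈ S) = κ := by
  rw [pathOPT, Multiset.countP_add, countP_range_map, countP_range_map]
  rw [count_pred_range (a := e + 1 - κ) (b := e + 1) (fun i hi => by
    simp only [List.mem_toFinset, window_mem hnd he]; omega)]
  rw [count_pred_range (a := e) (b := κ - 1) (fun d hd => by
    simp only [List.mem_toFinset, mem_take_iff hnd he]; omega)]
  omega

lemma pathOPT_cov2 {κ : ℕ} (hκ : 1 ≤ κ) {l : List α} (hnd : l.Nodup) {e : ℕ}
    (he : e + 1 < l.length) :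
    (pathOPT κ l).countP (fun S => l[e] ∈ S ∧ l[e+1] ∈ S) = κ - 1 := by
  rw [pathOPT, Multiset.countP_add, countP_range_map, countP_range_map]
  rw [count_pred_range (a := e + 2 - κ) (b := e + 1) (fun i hi => by
    simp only [List.mem_toFinset, window_mem hnd (show e < l.length by omega),
      window_mem hnd (show e + 1 < l.length from he)]
    omega)]
  rw [count_pred_range (a := e + 1) (b := κ - 1) (fun d hd => by
    simp only [List.mem_toFinset, mem_take_iff hnd (show e < l.length by omega),
      mem_take_iff hnd (show e + 1 < l.length from he)]
    omega)]
  omega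

/-- Cycle construction. -/
noncomputable def cycOPT (κ : ℕ) (l : List α) : Multiset (Finset α) :=
  if l.length ≤ κ then Multiset.replicate κ l.toFinset
  else (Multiset.range l.length).map (fun i => (((l ++ l).drop i).take κ).toFinset)

lemma cycOPT_mem {κ : ℕ} (hκ : 1 ≤ κ) {l : List α} (hnd : l.Nodup) (hl : l ≠ []) {S : Finset α}
    (hS : S ∈ cycOPT κ l) : S ⊆ l.toFinset ∧ S.card ≤ κ ∧ S.Nonempty := by
  have hl0 : 0 < l.length := List.length_pos_iff.mpr hl
  rw [cycOPT] at hS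
  split_ifs at hS with hmκ
  · rw [Multiset.eq_of_mem_replicate hS]
    refine ⟨Finset.Subset.refl _, ?_, ?_⟩
    · rw [List.toFinset_card_of_nodup hnd]; exact hmκ
    · exact ⟨l[0], by simp only [List.mem_toFinset]; exact List.getElem_mem _⟩
  · rw [Multiset.mem_map] at hS
    obtain ⟨i, hi, rfl⟩ := hS
    rw [Multiset.mem_range] at hi
    refine ⟨?_, ?_, ?_⟩
    · intro x hx
      simp only [List.mem_toFinset] at hx ⊢
      have := ((List.take_sublist _ _).trans (List.drop_sublist _ _)).mem hx
      rw [List.mem_append] at this; tauto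
    · exact (List.toFinset_card_le _).trans (by simp [List.length_take])
    · refine ⟨l[i], ?_⟩
      simp only [List.mem_toFinset]
      exact (window2_mem hnd hi i κ (by omega)).mpr (Or.inl (by omega))

lemma cycOPT_cov {κ : ℕ} (hκ : 1 ≤ κ) {l : List α} (hnd : l.Nodup) {e : ℕ}
    (he : e < l.length) :
    (cycOPT κ l).countP (fun S => l[e] ∈ S) = κ := by
  rw [cycOPT]
  split_ifs with hmκ
  · rw [countP_replicate]
    simp [List.mem_toFinset, List.getElem_mem]
  · rw [countP_range_map]
    rw [count_pred_range2 (a := e + 1 - κ) (b := e + 1) (a' := e + l.length + 1 - κ)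
      (b' := e + l.length + 1) (by omega) (fun i hi => by
        simp only [List.mem_toFinset, window2_mem hnd he i κ (by omega)]; omega)]
    omega

lemma cycOPT_cov2 {κ : ℕ} (hκ : 1 ≤ κ) {l : List α} (hnd : l.Nodup) {e : ℕ}
    (he : e + 1 < l.length) :
    κ - 1 ≤ (cycOPT κ l).countP (fun S => l[e] ∈ S ∧ l[e+1] ∈ S) := by
  rw [cycOPT]
  split_ifs with hmκ
  · rw [countP_replicate κ (by
      simp only [List.mem_toFinset]
      exact ⟨List.getElem_mem _, List.getElem_mem _⟩)]
    omega
  · rw [countP_range_map]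
    rw [count_pred_range2 (a := e + 2 - κ) (b := e + 1) (a' := e + l.length + 2 - κ)
      (b' := l.length) (by omega) (fun i hi => by
        simp only [List.mem_toFinset, window2_mem hnd (show e < l.length by omega) i κ (by omega),
          window2_mem hnd (show e + 1 < l.length from he) i κ (by omega)]
        omega)]
    omega

lemma cycOPT_cov2_wrap {κ : ℕ} (hκ : 1 ≤ κ) {l : List α} (hnd : l.Nodup) (hl2 : 2 ≤ l.length) :
    κ - 1 ≤ (cycOPT κ l).countP
      (fun S => l[l.length - 1]'(by omega) ∈ S ∧ l[0]'(by omega) ∈ S) := by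
  rw [cycOPT]
  split_ifs with hmκ
  · rw [countP_replicate κ (by
      simp only [List.mem_toFinset]
      exact ⟨List.getElem_mem _, List.getElem_mem _⟩)]
    omega
  · rw [countP_range_map]
    rw [count_pred_range (a := l.length + 1 - κ) (b := l.length) (fun i hi => by
      simp only [List.mem_toFinset,
        window2_mem hnd (show l.length - 1 < l.length by omega) i κ (by omega),
        window2_mem hnd (show 0 < l.length by omega) i κ (by omega)]
      omega)]
    omega

lemma getElem_eq_of_eq {l : List α} {i j : ℕ} (h : i = j) (hi : i < l.length) :
    l[i] = l[j]'(h ▸ hi) := by subst h; rfl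

lemma countP_and_comm (s : Multiset (Finset α)) (x y : α) :
    s.countP (fun S => x ∈ S ∧ y ∈ S) = s.countP (fun S => y ∈ S ∧ x ∈ S) :=
  Multiset.countP_congr rfl (fun S _ => by simpa using propext and_comm)

lemma coverLemma (κ : ℕ) (hκ : 1 ≤ κ) (Adj : α → α → Prop)
    (hsymm : ∀ x y, Adj x y → Adj y x) (hne : ∀ x y, Adj x y → x ≠ y) :
    ∀ X : Finset α,
    (∀ x ∈ X, ∀ y1 ∈ X, ∀ y2 ∈ X, ∀ y3 ∈ X, Adj x y1 → Adj x y2 → Adj x y3 →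
      y1 = y2 ∨ y1 = y3 ∨ y2 = y3) →
    ∃ OPT : Multiset (Finset α),
      (∀ S ∈ OPT, S ⊆ X ∧ S.card ≤ κ ∧ S.Nonempty) ∧
      (∀ x ∈ X, OPT.countP (fun S => x ∈ S) = κ) ∧
      (∀ x ∈ X, ∀ y ∈ X, Adj x y → κ - 1 ≤ OPT.countP (fun S => x ∈ S ∧ y ∈ S)) := by
  intro X
  induction X using Finset.strongInductionOn with
  | _ X IH =>
  intro hdeg
  rcases X.eq_empty_or_nonempty with rfl | ⟨x0, hx0⟩
  · exact ⟨0, by simp, by simp, by simp⟩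
  -- maximal chain
  set P : ℕ → Prop := fun n => ∃ l : List α, l.length = n ∧ l ≠ [] ∧ l.Nodup ∧
      (∀ a ∈ l, a ∈ X) ∧ l.Chain' Adj with hPdef
  have hP1 : P 1 := ⟨[x0], rfl, by simp, by simp, by simpa using hx0, by simp [List.Chain']⟩
  have hPbd : ∀ n, P n → n ≤ X.card := by
    rintro n ⟨l, rfl, -, hnd, hsub, -⟩
    calc l.length = l.toFinset.card := (List.toFinset_card_of_nodup hnd).symm
    _ ≤ X.card := Finset.card_le_card (fun a ha => hsub a (List.mem_toFinset.mp ha))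
  obtain ⟨l, hlen, hlne, hnd, hsub, hch⟩ :=
    Nat.findGreatest_spec (hPbd 1 hP1) hP1
  have hmax : ∀ m, P m → m ≤ l.length := by
    intro m hm
    rw [hlen]
    exact Nat.le_findGreatest (hPbd m hm) hm
  clear hlen
  have hl0 : 0 < l.length := List.length_pos_iff.mpr hlne
  have hchain : ∀ i (h : i + 1 < l.length), Adj l[i] l[i+1] := by
    intro i h
    have := List.isChain_iff_getElem.mp hch i (by omega)
    simpa [List.get_eq_getElem] using this
  have hchain' : ∀ i j (hj : j < l.length) (hij : j = i + 1), Adj (l[i]'(by omega)) l[j] := by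
    rintro i j hj rfl
    exact hchain i hj
  -- closure at the head
  have hclose : ∀ y ∈ X, Adj y l[0] → y ∈ l := by
    intro y hy hadj
    by_contra hyl
    obtain ⟨h1, h2⟩ := extend_chain hl0 hnd hch hyl hadj
    have := hmax (y :: l).length ⟨y :: l, rfl, by simp, h1, by
      intro a ha; rcases List.mem_cons.mp ha with rfl | ha
      exacts [hy, hsub a ha], h2⟩
    simp at this
  -- closure at the last element
  have hcloseL : ∀ y ∈ X, Adj y (l[l.length - 1]'(by omega)) → y ∈ l := by
    intro y hy hadj
    by_contra hyl
    have h0r : 0 < l.reverse.length := by simpa using hl0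
    have hrev0 : l.reverse[0]'h0r = l[l.length - 1]'(by omega) := by
      rw [List.getElem_reverse]
      exact getElem_eq_of_eq (by omega) _
    have hrevch : l.reverse.Chain' Adj := by
      show List.IsChain Adj l.reverse
      rw [List.isChain_reverse]
      exact List.IsChain.imp (fun a b hh => hsymm a b hh) hch
    obtain ⟨h1, h2⟩ := extend_chain h0r (by simpa using hnd) hrevch
      (by simpa using hyl) (hrev0 ▸ hadj)
    have := hmax (y :: l.reverse).length ⟨y :: l.reverse, rfl, by simp, h1, by
      intro a ha; rcases List.mem_cons.mp ha with rfl | ha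
      exacts [hy, hsub a (by simpa using ha)], h2⟩
    simp at this
  -- all neighbours of chain elements lie on the chain
  have hAdjmem : ∀ i (hi : i < l.length) (y), y ∈ X → Adj l[i] y → y ∈ l := by
    intro i hi y hy hadj
    by_contra hyl
    by_cases hi0 : i = 0
    · subst hi0; exact hyl (hclose y hy (hsymm _ _ hadj))
    by_cases hiL : i = l.length - 1
    · subst hiL; exact hyl (hcloseL y hy (hsymm _ _ hadj))
    have hadj1 : Adj l[i] (l[i-1]'(by omega)) :=
      hsymm _ _ (hchain' (i-1) i (by omega) (by omega))
    have hadj2 : Adj l[i] (l[i+1]'(by omega)) := hchain i (by omega)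
    rcases hdeg l[i] (hsub _ (List.getElem_mem _)) _ (hsub _ (List.getElem_mem _))
      _ (hsub _ (List.getElem_mem _)) y hy hadj1 hadj2 hadj with h | h | h
    · have := (List.Nodup.getElem_inj_iff hnd).mp h; omega
    · exact hyl (h ▸ List.getElem_mem _)
    · exact hyl (h ▸ List.getElem_mem _)
  -- adjacency within the chain is (cyclically) consecutive
  have hB : ∀ i j (hi : i < l.length) (hj : j < l.length), i < j → Adj l[i] l[j] →
      j = i + 1 ∨ (2 < l.length ∧ i = 0 ∧ j = l.length - 1) := by
    intro i j hi hj hij hadj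
    by_contra hcon
    push_neg at hcon
    obtain ⟨hne1, hne2⟩ := hcon
    have hji : i + 1 < j := by omega
    have hm3 : 2 < l.length := by omega
    have hi0 : i = 0 := by
      by_contra hi0
      have hadj1 : Adj l[i] (l[i-1]'(by omega)) :=
        hsymm _ _ (hchain' (i-1) i (by omega) (by omega))
      have hadj2 : Adj l[i] (l[i+1]'(by omega)) := hchain i (by omega)
      rcases hdeg l[i] (hsub _ (List.getElem_mem _)) _ (hsub _ (List.getElem_mem _))
        _ (hsub _ (List.getElem_mem _)) _ (hsub _ (List.getElem_mem _))
        hadj1 hadj2 hadj with h | h | h <;>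
      · have := (List.Nodup.getElem_inj_iff hnd).mp h; omega
    subst hi0
    have hjL : j ≠ l.length - 1 := hne2 hm3 rfl
    have hadj1 : Adj l[j] (l[j-1]'(by omega)) :=
      hsymm _ _ (hchain' (j-1) j (by omega) (by omega))
    have hadj2 : Adj l[j] (l[j+1]'(by omega)) := hchain j (by omega)
    rcases hdeg l[j] (hsub _ (List.getElem_mem _)) _ (hsub _ (List.getElem_mem _))
      _ (hsub _ (List.getElem_mem _)) _ (hsub _ (List.getElem_mem _))
      hadj1 hadj2 (hsymm _ _ hadj) with h | h | h <;>
    · have := (List.Nodup.getElem_inj_iff hnd).mp h; omega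
  -- choose the per-component construction
  set OPTl : Multiset (Finset α) :=
    if 3 ≤ l.length ∧ Adj l[0] (l[l.length - 1]'(by omega)) then cycOPT κ l else pathOPT κ l
    with hOPTl
  have hOPTl_mem : ∀ S ∈ OPTl, S ⊆ l.toFinset ∧ S.card ≤ κ ∧ S.Nonempty := by
    intro S hS
    rw [hOPTl] at hS
    split_ifs at hS
    exacts [cycOPT_mem hκ hnd hlne hS, pathOPT_mem hκ hnd hlne hS]
  have hOPTl_cov : ∀ e (he : e < l.length), OPTl.countP (fun S => l[e] ∈ S) = κ := by
    intro e he
    rw [hOPTl]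
    split_ifs
    exacts [cycOPT_cov hκ hnd he, pathOPT_cov hκ hnd he]
  have hOPTl_cov2 : ∀ i j (hi : i < l.length) (hj : j < l.length), Adj l[i] l[j] →
      κ - 1 ≤ OPTl.countP (fun S => l[i] ∈ S ∧ l[j] ∈ S) := by
    have key : ∀ i j (hi : i < l.length) (hj : j < l.length), i < j → Adj l[i] l[j] →
        κ - 1 ≤ OPTl.countP (fun S => l[i] ∈ S ∧ l[j] ∈ S) := by
      intro i j hi hj hij hadj
      rcases hB i j hi hj hij hadj with rfl | ⟨hm3, rfl, rfl⟩
      · rw [hOPTl]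
        split_ifs
        · exact cycOPT_cov2 hκ hnd hj
        · exact (pathOPT_cov2 hκ hnd hj).ge
      · rw [hOPTl]
        have h3 : 3 ≤ l.length := by omega
        rw [if_pos ⟨h3, hadj⟩, countP_and_comm]
        exact cycOPT_cov2_wrap hκ hnd (by omega)
    intro i j hi hj hadj
    rcases lt_trichotomy i j with h | h | h
    · exact key i j hi hj h hadj
    · exact absurd (getElem_eq_of_eq h hi) (hne _ _ hadj)
    · rw [countP_and_comm]
      exact key j i hj hi h (hsymm _ _ hadj)
  -- recurse on the rest
  have hlsub : l.toFinset ⊆ X := fun a ha => hsub a (List.mem_toFinset.mp ha)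
  have hss : X \ l.toFinset ⊂ X :=
    Finset.sdiff_ssubset hlsub ⟨l[0], List.mem_toFinset.mpr (List.getElem_mem _)⟩
  obtain ⟨OPT', hmem', hcov', hcov2'⟩ := IH (X \ l.toFinset) hss (by
    intro x hx y1 hy1 y2 hy2 y3 hy3 h1 h2 h3
    exact hdeg x (Finset.sdiff_subset hx) y1 (Finset.sdiff_subset hy1)
      y2 (Finset.sdiff_subset hy2) y3 (Finset.sdiff_subset hy3) h1 h2 h3)
  refine ⟨OPTl + OPT', ?_, ?_, ?_⟩
  · intro S hS
    rcases Multiset.mem_add.mp hS with hS | hS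
    · obtain ⟨h1, h2, h3⟩ := hOPTl_mem S hS
      exact ⟨h1.trans hlsub, h2, h3⟩
    · obtain ⟨h1, h2, h3⟩ := hmem' S hS
      exact ⟨h1.trans Finset.sdiff_subset, h2, h3⟩
  · intro x hx
    rw [Multiset.countP_add]
    by_cases hxl : x ∈ l
    · obtain ⟨i, hi, rfl⟩ := List.mem_iff_getElem.mp hxl
      rw [hOPTl_cov i hi, Multiset.countP_eq_zero.mpr, add_zero]
      intro S hS hmem
      exact absurd ((hmem' S hS).1 hmem) (by simp [hxl])
    · rw [hcov' x (Finset.mem_sdiff.mpr ⟨hx, by simpa using hxl⟩),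
        Multiset.countP_eq_zero.mpr, zero_add]
      intro S hS hmem
      exact hxl (List.mem_toFinset.mp ((hOPTl_mem S hS).1 hmem))
  · intro x hx y hy hadj
    rw [Multiset.countP_add]
    by_cases hxl : x ∈ l
    · obtain ⟨i, hi, rfl⟩ := List.mem_iff_getElem.mp hxl
      have hyl : y ∈ l := hAdjmem i hi y hy hadj
      obtain ⟨j, hj, rfl⟩ := List.mem_iff_getElem.mp hyl
      have := hOPTl_cov2 i j hi hj hadj
      omega
    · have hyl : y ∉ l := by
        intro hyl
        obtain ⟨j, hj, rfl⟩ := List.mem_iff_getElem.mp hyl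
        exact hxl (hAdjmem j hj x hx (hsymm _ _ hadj))
      have := hcov2' x (Finset.mem_sdiff.mpr ⟨hx, by simpa using hxl⟩)
        y (Finset.mem_sdiff.mpr ⟨hy, by simpa using hyl⟩) hadj
      omega

end MADaux

namespace MADaux
set_option maxHeartbeats 1000000
set_option linter.unusedSectionVars false

section helpers
variable {β γ : Type*} [DecidableEq γ]

lemma countP_or_and {s : Multiset β} (p q : β → Prop) [DecidablePred p] [DecidablePred q] :
    s.countP (fun S => p S ∨ q S) + s.countP (fun S => p S ∧ q S)
      = s.countP p + s.countP q := by
  induction s using Multiset.induction with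
  | empty => simp
  | cons a s ih =>
    simp only [Multiset.countP_cons]
    by_cases hp : p a <;> by_cases hq : q a <;> simp [hp, hq] <;> omega

lemma sum_swap_real (OPT : Multiset β) (A : Finset γ) (f : β → Finset γ)
    (hf : ∀ S ∈ OPT, f S ⊆ A) (g : γ → ℝ) :
    (OPT.map (fun S => ∑ x ∈ f S, g x)).sum
      = ∑ x ∈ A, (OPT.countP (fun S => x ∈ f S) : ℝ) * g x := by
  induction OPT using Multiset.induction with
  | empty => simp
  | cons S OPT ih =>
    rw [Multiset.map_cons, Multiset.sum_cons,
      ih (fun T hT => hf T (Multiset.mem_cons_of_mem hT))]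
    have hcnt : ∀ x : γ, ((Multiset.countP (fun T => x ∈ f T) (S ::ₘ OPT) : ℕ) : ℝ)
        = (if x ∈ f S then (1:ℝ) else 0) + (Multiset.countP (fun T => x ∈ f T) OPT : ℝ) := by
      intro x
      rw [Multiset.countP_cons]
      split_ifs <;> push_cast <;> ring
    simp_rw [hcnt, add_mul, Finset.sum_add_distrib]
    congr 1
    have : ∀ x ∈ A, (if x ∈ f S then (1:ℝ) else 0) * g x = if x ∈ f S then g x else 0 := by
      intro x _; split_ifs <;> ring
    rw [Finset.sum_congr rfl this, Finset.sum_ite_mem,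
      Finset.inter_eq_right.mpr (hf S (Multiset.mem_cons_self S OPT))]

lemma card_sum_eq (OPT : Multiset (Finset γ)) (A : Finset γ) (hf : ∀ S ∈ OPT, S ⊆ A) :
    (OPT.map Finset.card).sum = ∑ x ∈ A, OPT.countP (fun S => x ∈ S) := by
  induction OPT using Multiset.induction with
  | empty => simp
  | cons S OPT ih =>
    rw [Multiset.map_cons, Multiset.sum_cons,
      ih (fun T hT => hf T (Multiset.mem_cons_of_mem hT))]
    simp_rw [Multiset.countP_cons, Finset.sum_add_distrib]
    have : ∑ x ∈ A, (if x ∈ S then 1 else 0) = S.card := by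
      rw [← Finset.card_filter, Finset.filter_mem_eq_inter,
        Finset.inter_eq_right.mpr (hf S (Multiset.mem_cons_self S OPT))]
    omega

lemma card_le_sum_card (OPT : Multiset (Finset γ)) (h : ∀ S ∈ OPT, S.Nonempty) :
    Multiset.card OPT ≤ (OPT.map Finset.card).sum := by
  induction OPT using Multiset.induction with
  | empty => simp
  | cons S OPT ih =>
    simp only [Multiset.map_cons, Multiset.sum_cons, Multiset.card_cons]
    have h1 : 1 ≤ S.card := Finset.Nonempty.card_pos (h S (Multiset.mem_cons_self S OPT))
    have := ih (fun T hT => h T (Multiset.mem_cons_of_mem hT))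
    omega

end helpers

section matching
variable {V : Type*}

lemma mem_touchedEdges {c T : Finset (Sym2 V)} {e : Sym2 V} :
    e ∈ touchedEdges c T ↔ e ∈ c ∧ ∃ j ∈ T, ∃ v, v ∈ e ∧ v ∈ j := by
  rw [touchedEdges, Finset.mem_filter]

lemma touchedEdges_subset (c T : Finset (Sym2 V)) : touchedEdges c T ⊆ c :=
  Finset.filter_subset _ _

lemma matching_unique {c : Finset (Sym2 V)} (hc : IsMatchingSym2 c) {j j' : Sym2 V}
    (hj : j ∈ c) (hj' : j' ∈ c) {v : V} (h : v ∈ j) (h' : v ∈ j') : j = j' := by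
  by_contra hne
  exact hc.2 j hj j' hj' hne v h h'

lemma vertex_filter_card {c : Finset (Sym2 V)} (hc : IsMatchingSym2 c) (v : V) :
    (c.filter (fun j => v ∈ j)).card ≤ 1 := by
  refine Finset.card_le_one.mpr (fun a ha b hb => ?_)
  simp only [Finset.mem_filter] at ha hb
  exact matching_unique hc ha.1 hb.1 ha.2 hb.2

lemma touch_card_le_two [Fintype V] {c' : Finset (Sym2 V)} (hc' : IsMatchingSym2 c') (e : Sym2 V) :
    (c'.filter (fun j => ∃ v, v ∈ e ∧ v ∈ j)).card ≤ 2 := by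
  induction e using Sym2.ind with
  | _ a b =>
  have hsub : c'.filter (fun j => ∃ v, v ∈ s(a, b) ∧ v ∈ j)
      ⊆ (c'.filter (fun j => a ∈ j)) ∪ (c'.filter (fun j => b ∈ j)) := by
    intro j hj
    simp only [Finset.mem_filter, Finset.mem_union] at hj ⊢
    obtain ⟨hjc, v, hv1, hv2⟩ := hj
    rw [Sym2.mem_iff] at hv1
    rcases hv1 with rfl | rfl
    exacts [Or.inl ⟨hjc, hv2⟩, Or.inr ⟨hjc, hv2⟩]
  calc _ ≤ _ := Finset.card_le_card hsub
  _ ≤ _ := Finset.card_union_le _ _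
  _ ≤ 2 := by
    have := vertex_filter_card hc' a
    have := vertex_filter_card hc' b
    omega

lemma matching_card_le [Fintype V] {c' : Finset (Sym2 V)} (hc' : IsMatchingSym2 c') :
    c'.card ≤ Fintype.card V := by
  classical
  rw [← Finset.card_univ]
  refine Finset.card_le_card_of_injOn (fun j => j.out.1)
    (fun j _ => Finset.mem_univ _) ?_
  intro j hj j' hj' h
  have h' : j.out.1 = j'.out.1 := h
  refine matching_unique hc' hj hj' (Sym2.out_fst_mem j) ?_
  rw [h']
  exact Sym2.out_fst_mem j'

end matching
end MADaux

open MADaux in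
theorem MADaux_main
    {V : Type*} [Fintype V] (c c' : Finset (Sym2 V))
    (hc : IsMatchingSym2 c) (hc' : IsMatchingSym2 c')
    (w w' : Sym2 V → ℝ) (hw : ∀ j, w' j ≤ w j) (hw' : ∀ j, 0 ≤ w' j)
    (κ : ℕ) (hκ : 1 ≤ κ) :
    ∃ OPT : Multiset (Finset (Sym2 V)),
      (∀ T ∈ OPT, T ⊆ c' ∧ T.card ≤ κ) ∧
      Multiset.card OPT ≤ κ * Fintype.card V ∧
      (OPT.map (fun T => (∑ j ∈ T, w' j) - ∑ j ∈ touchedEdges c T, w j)).sum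
        ≥ (κ : ℝ) * (∑ j ∈ c', w' j) - ((κ : ℝ) + 1) * (∑ j ∈ c, w j) := by
  set Adj : Sym2 V → Sym2 V → Prop := fun j j' => j ≠ j' ∧
    ∃ e ∈ c, (∃ v, v ∈ e ∧ v ∈ j) ∧ (∃ v, v ∈ e ∧ v ∈ j') with hAdj
  have hsymm : ∀ x y, Adj x y → Adj y x := by
    rintro x y ⟨h1, e, he, h2, h3⟩
    exact ⟨h1.symm, e, he, h3, h2⟩
  have hne : ∀ x y, Adj x y → x ≠ y := fun x y h => h.1
  -- at most two neighbours
  have hdeg : ∀ x ∈ c', ∀ y1 ∈ c', ∀ y2 ∈ c', ∀ y3 ∈ c',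
      Adj x y1 → Adj x y2 → Adj x y3 → y1 = y2 ∨ y1 = y3 ∨ y2 = y3 := by
    intro x
    induction x using Sym2.ind with
    | _ u v =>
    intro hx
    -- at most one neighbour through a given vertex z of x
    have key : ∀ z : V, z ∈ s(u, v) → ∀ y1 ∈ c', ∀ y2 ∈ c', Adj s(u, v) y1 → Adj s(u, v) y2 →
        (∃ e ∈ c, z ∈ e ∧ ∃ p, p ∈ e ∧ p ∈ y1) →
        (∃ e ∈ c, z ∈ e ∧ ∃ p, p ∈ e ∧ p ∈ y2) → y1 = y2 := by
      rintro z hz y1 hy1 y2 hy2 hxy1 hxy2 ⟨e1, he1, hze1, p1, hp1e, hp1y⟩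
        ⟨e2, he2, hze2, p2, hp2e, hp2y⟩
      have he12 : e1 = e2 := matching_unique hc he1 he2 hze1 hze2
      subst he12
      obtain ⟨zz, rfl⟩ := Sym2.mem_iff_exists.mp hze1
      have hzy1 : p1 ≠ z := by
        rintro rfl
        exact (hne _ _ hxy1) (matching_unique hc' hx hy1 hz hp1y)
      have hzy2 : p2 ≠ z := by
        rintro rfl
        exact (hne _ _ hxy2) (matching_unique hc' hx hy2 hz hp2y)
      have hp1' : p1 = z ∨ p1 = zz := Sym2.mem_iff.mp hp1e
      have hp2' : p2 = z ∨ p2 = zz := Sym2.mem_iff.mp hp2e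
      have hpp : p1 = p2 := by
        rcases hp1' with rfl | rfl
        · exact absurd rfl hzy1
        · rcases hp2' with rfl | rfl
          · exact absurd rfl hzy2
          · rfl
      exact matching_unique hc' hy1 hy2 hp1y (hpp ▸ hp2y)
    -- every neighbour comes through u or through v
    have split : ∀ y, Adj s(u, v) y →
        (∃ e ∈ c, u ∈ e ∧ ∃ p, p ∈ e ∧ p ∈ y) ∨ (∃ e ∈ c, v ∈ e ∧ ∃ p, p ∈ e ∧ p ∈ y) := by
      rintro y ⟨-, e, he, ⟨q, hqe, hqx⟩, ⟨p, hpe, hpy⟩⟩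
      rw [Sym2.mem_iff] at hqx
      rcases hqx with rfl | rfl
      · exact Or.inl ⟨e, he, hqe, p, hpe, hpy⟩
      · exact Or.inr ⟨e, he, hqe, p, hpe, hpy⟩
    intro y1 hy1 y2 hy2 y3 hy3 h1 h2 h3
    have hu : u ∈ s(u, v) := by simp
    have hv : v ∈ s(u, v) := by simp
    rcases split y1 h1 with s1 | s1 <;> rcases split y2 h2 with s2 | s2 <;>
      rcases split y3 h3 with s3 | s3
    · exact Or.inl (key u hu y1 hy1 y2 hy2 h1 h2 s1 s2)
    · exact Or.inl (key u hu y1 hy1 y2 hy2 h1 h2 s1 s2)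
    · exact Or.inr (Or.inl (key u hu y1 hy1 y3 hy3 h1 h3 s1 s3))
    · exact Or.inr (Or.inr (key v hv y2 hy2 y3 hy3 h2 h3 s2 s3))
    · exact Or.inr (Or.inr (key u hu y2 hy2 y3 hy3 h2 h3 s2 s3))
    · exact Or.inr (Or.inl (key v hv y1 hy1 y3 hy3 h1 h3 s1 s3))
    · exact Or.inl (key v hv y1 hy1 y2 hy2 h1 h2 s1 s2)
    · exact Or.inl (key v hv y1 hy1 y2 hy2 h1 h2 s1 s2)
  obtain ⟨OPT, hmem, hcov, hcov2⟩ := coverLemma κ hκ Adj hsymm hne c' hdeg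
  refine ⟨OPT, fun T hT => ⟨(hmem T hT).1, (hmem T hT).2.1⟩, ?_, ?_⟩
  · calc Multiset.card OPT ≤ (OPT.map Finset.card).sum :=
          card_le_sum_card OPT (fun S hS => (hmem S hS).2.2)
    _ = ∑ x ∈ c', OPT.countP (fun S => x ∈ S) := card_sum_eq OPT c' (fun S hS => (hmem S hS).1)
    _ = ∑ _x ∈ c', κ := Finset.sum_congr rfl (fun x hx => hcov x hx)
    _ = c'.card * κ := by rw [Finset.sum_const, smul_eq_mul]
    _ ≤ Fintype.card V * κ := Nat.mul_le_mul_right κ (matching_card_le hc')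
    _ = κ * Fintype.card V := Nat.mul_comm _ _
  · have hsplit : (OPT.map (fun T => (∑ j ∈ T, w' j) - ∑ j ∈ touchedEdges c T, w j)).sum
        = (OPT.map (fun T => ∑ j ∈ T, w' j)).sum
          - (OPT.map (fun T => ∑ j ∈ touchedEdges c T, w j)).sum := by
      rw [← Multiset.sum_map_sub]
    rw [hsplit]
    have h1 : (OPT.map (fun T => ∑ j ∈ T, w' j)).sum = (κ : ℝ) * ∑ j ∈ c', w' j := by
      rw [sum_swap_real OPT c' (fun T => T) (fun S hS => (hmem S hS).1) w', Finset.mul_sum]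
      refine Finset.sum_congr rfl (fun x hx => ?_)
      rw [hcov x hx]
    rw [h1]
    have h2 : (OPT.map (fun T => ∑ j ∈ touchedEdges c T, w j)).sum
        ≤ ((κ : ℝ) + 1) * ∑ j ∈ c, w j := by
      rw [sum_swap_real OPT c (fun T => touchedEdges c T)
        (fun S _ => touchedEdges_subset c S) w, Finset.mul_sum]
      refine Finset.sum_le_sum (fun e he => ?_)
      have hwpos : 0 ≤ w e := le_trans (hw' e) (hw e)
      refine mul_le_mul_of_nonneg_right ?_ hwpos
      have hcount : OPT.countP (fun T => e ∈ touchedEdges c T)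
          = OPT.countP (fun T => ∃ j ∈ Finset.filter (fun j => ∃ v, v ∈ e ∧ v ∈ j) c', j ∈ T) := by
        refine Multiset.countP_congr rfl (fun T hT => ?_)
        have hTs := (hmem T hT).1
        simp only [eq_iff_iff]
        constructor
        · intro hmem2
          obtain ⟨-, j, hjT, v, hv1, hv2⟩ := mem_touchedEdges.mp hmem2
          exact ⟨j, Finset.mem_filter.mpr ⟨hTs hjT, v, hv1, hv2⟩, hjT⟩
        · rintro ⟨j, hjN, hjT⟩
          rw [Finset.mem_filter] at hjN
          obtain ⟨-, v, hv1, hv2⟩ := hjN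
          exact mem_touchedEdges.mpr ⟨he, j, hjT, v, hv1, hv2⟩
      rw [hcount]
      have hN2 : (Finset.filter (fun j => ∃ v, v ∈ e ∧ v ∈ j) c').card ≤ 2 :=
        touch_card_le_two hc' e
      have hNsub : Finset.filter (fun j => ∃ v, v ∈ e ∧ v ∈ j) c' ⊆ c' :=
        Finset.filter_subset _ _
      set N := Finset.filter (fun j => ∃ v, v ∈ e ∧ v ∈ j) c' with hNdef
      have hbound : OPT.countP (fun T => ∃ j ∈ N, j ∈ T) ≤ κ + 1 := by
        interval_cases hcard : N.card
        · have hNe : N = ∅ := Finset.card_eq_zero.mp hcard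
          rw [Multiset.countP_eq_zero.mpr (by intro T _; rw [hNe]; simp)]
          omega
        · obtain ⟨j0, hj0⟩ := Finset.card_eq_one.mp hcard
          have heq1 : OPT.countP (fun T => ∃ j ∈ N, j ∈ T) = OPT.countP (fun T => j0 ∈ T) := by
            refine Multiset.countP_congr rfl (fun T _ => ?_)
            rw [hj0]; simp
          have hc0 : OPT.countP (fun T => j0 ∈ T) = κ :=
            (Multiset.countP_congr rfl (fun _ _ => rfl)).trans
              (hcov j0 (hNsub (hj0 ▸ Finset.mem_singleton_self j0)))
          omega
        · obtain ⟨j1, j2, hj12, hj⟩ := Finset.card_eq_two.mp hcard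
          have hj1N : j1 ∈ N := hj ▸ by simp
          have hj2N : j2 ∈ N := hj ▸ by simp
          have heq1 : OPT.countP (fun T => ∃ j ∈ N, j ∈ T)
              = OPT.countP (fun T => j1 ∈ T ∨ j2 ∈ T) := by
            refine Multiset.countP_congr rfl (fun T _ => ?_)
            rw [hj]; simp
          have hAdj12 : Adj j1 j2 := by
            refine ⟨hj12, e, he, ?_, ?_⟩
            · rw [hNdef] at hj1N
              exact (Finset.mem_filter.mp hj1N).2
            · rw [hNdef] at hj2N
              exact (Finset.mem_filter.mp hj2N).2
          have hie := countP_or_and (s := OPT) (fun T => j1 ∈ T) (fun T => j2 ∈ T)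
          have hc1 : OPT.countP (fun T => j1 ∈ T) = κ :=
            (Multiset.countP_congr rfl (fun _ _ => rfl)).trans (hcov j1 (hNsub hj1N))
          have hc2 : OPT.countP (fun T => j2 ∈ T) = κ :=
            (Multiset.countP_congr rfl (fun _ _ => rfl)).trans (hcov j2 (hNsub hj2N))
          have hco : κ - 1 ≤ OPT.countP (fun T => j1 ∈ T ∧ j2 ∈ T) :=
            le_trans (hcov2 j1 (hNsub hj1N) j2 (hNsub hj2N) hAdj12)
              (le_of_eq (Multiset.countP_congr rfl (fun _ _ => rfl)))
          omega
      calc ((OPT.countP (fun T => ∃ j ∈ N, j ∈ T) : ℕ) : ℝ) ≤ ((κ + 1 : ℕ) : ℝ) :=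
            Nat.cast_le.mpr hbound
      _ = (κ : ℝ) + 1 := by push_cast; ring
    linarith

/-- Decomposition lemma (following Hougardy–Vinkemeier): given matchings `c, c'` in a
graph on `r` vertices and edge weights `w_j ≥ w'_j ≥ 0`, for any `κ ≥ 1` there is a
multiset `OPT` of augmentations `T ⊆ c'` of size `≤ κ` with `|OPT| ≤ κr` and
`∑_{T ∈ OPT} gain(T) ≥ κ·W' - (κ+1)·W`, where
`gain(T) = ∑_{j∈T} w'_j - ∑_{j∈M(T)} w_j`, `W = ∑_{j∈c} w_j`, `W' = ∑_{j∈c'} w'_j`. -/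
theorem matching_augmentation_decomposition
    {V : Type*} [Fintype V] (c c' : Finset (Sym2 V))
    (hc : IsMatchingSym2 c) (hc' : IsMatchingSym2 c')
    (w w' : Sym2 V → ℝ) (hw : ∀ j, w' j ≤ w j) (hw' : ∀ j, 0 ≤ w' j)
    (κ : ℕ) (hκ : 1 ≤ κ) :
    ∃ OPT : Multiset (Finset (Sym2 V)),
      (∀ T ∈ OPT, T ⊆ c' ∧ T.card ≤ κ) ∧
      Multiset.card OPT ≤ κ * Fintype.card V ∧
      (OPT.map (fun T => (∑ j ∈ T, w' j) - ∑ j ∈ touchedEdges c T, w j)).sum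
        ≥ (κ : ℝ) * (∑ j ∈ c', w' j) - ((κ : ℝ) + 1) * (∑ j ∈ c, w j) := by
  exact MADaux_main c c' hc hc' w w' hw hw' κ hκ
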